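/- Let n, N, l be natural numbers. For each i ∈ {1,…,l} let f_i : ℝ → ℝ be measurable, log-concave, and integrable on (−∞, z) and on (z, ∞) for every z ∈ ℝ; let c_i ∈ ℝ^n and τ_i ∈ ℝ; and let y : {0,…,N} × {1,…,l} → {0,1} be given binary values. Let A ∈ ℝ^{n×n}, b : {0,…,N−1} → ℝ^n, x̄ ∈ ℝ^n, and let Ψ, G ∈ ℝ^{n×n} be positive semidefinite. Define on trajectories X = (x_0,…,x_N) ∈ (ℝ^n)^{N+1} the cost J(X) = ‖x_0 − x̄‖²_Ψ + Σ_{j=0}^{N−1} ‖x_{j+1} − A x_j − b_j‖²_G − Σ_{j=0}^{N} Σ_{i=1}^{l} [ (1 − y(j,i)) · log( ∫_{(−∞, τ_i − ⟨c_i, x_j⟩)} f_i(s) ds ) + y(j,i) · log( ∫_{(τ_i − ⟨c_i, x_j⟩, ∞)} f_i(s) ds ) ], and let S = { X ∈ (ℝ^n)^{N+1} : for all j, i, (y(j,i) = 0 implies ∫_{(−∞, τ_i − ⟨c_i, x_j⟩)} f_i(s) ds > 0) and (y(j,i) = 1 implies ∫_{(τ_i − ⟨c_i, x_j⟩, ∞)}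 f_i(s) ds > 0) }. Then S is convex and J is convex on S. -/

import Mathlib

open MeasureTheory Set Filter

noncomputable section

namespace Stmt12Aux


lemma four_pt {f : ℝ → ℝ} (h0 : ∀ x, 0 ≤ f x)
    (hlc : ∀ x y t : ℝ, 0 ≤ t → t ≤ 1 → f x ^ (1 - t) * f y ^ t ≤ f ((1 - t) * x + t * y))
    {s u v r : ℝ} (h1 : s ≤ u) (h2 : u ≤ v) (h3 : v ≤ r) (hsum : s + r = u + v) :
    f s * f r ≤ f u * f v := by
  rcases eq_or_lt_of_le (h1.trans (h2.trans h3)) with h | h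
  · have hsu : s = u := le_antisymm h1 (by linarith)
    have hvr : v = r := le_antisymm h3 (by linarith)
    rw [hsu, ← hvr]
  · obtain ⟨t, ht⟩ : ∃ t : ℝ, t = (u - s) / (r - s) := ⟨_, rfl⟩
    have hrs : (0:ℝ) < r - s := by linarith
    have ht0 : 0 ≤ t := ht ▸ div_nonneg (by linarith) hrs.le
    have ht1 : t ≤ 1 := by rw [ht, div_le_one hrs]; linarith
    have hu : (1 - t) * s + t * r = u := by rw [ht]; field_simp; ring
    have hv : (1 - (1-t)) * s + (1-t) * r = v := by rw [ht]; field_simp; ring_nf; nlinarith [hsum]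
    have H1 := hlc s r t ht0 ht1
    have H2 := hlc s r (1 - t) (by linarith) (by linarith)
    rw [hu] at H1
    rw [hv] at H2
    have key : f s ^ (1 - t) * f r ^ t * (f s ^ (1 - (1 - t)) * f r ^ (1 - t)) = f s * f r := by
      rw [show (1 - (1-t)) = t by ring, mul_mul_mul_comm,
        ← Real.rpow_add' (h0 s) (by norm_num), ← Real.rpow_add' (h0 r) (by norm_num)]
      norm_num
    calc f s * f r = f s ^ (1 - t) * f r ^ t * (f s ^ (1 - (1 - t)) * f r ^ (1 - t)) := key.symm
      _ ≤ f u * f v :=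
          mul_le_mul H1 H2
            (mul_nonneg (Real.rpow_nonneg (h0 s) _) (Real.rpow_nonneg (h0 r) _)) (h0 u)



lemma emb_add (d : ℝ) : MeasurableEmbedding (fun a : ℝ => a + d) :=
  (Homeomorph.addRight d).isClosedEmbedding.measurableEmbedding

lemma setIntegral_comp_add (f : ℝ → ℝ) (d : ℝ) (s : Set ℝ) :
    ∫ a in (fun a : ℝ => a + d) ⁻¹' s, f (a + d) = ∫ a in s, f a := by
  rw [← (emb_add d).setIntegral_map (μ := volume) f s, map_add_right_eq_self volume d]

lemma integral_Iio_comp_add (f : ℝ → ℝ) (d z : ℝ) :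
    ∫ a in Iio z, f (a + d) = ∫ a in Iio (z + d), f a := by
  have hpre : (fun a : ℝ => a + d) ⁻¹' (Iio (z + d)) = Iio z := by
    ext a; simp only [mem_preimage, mem_Iio]; constructor <;> intro <;> linarith
  rw [← hpre, setIntegral_comp_add]

lemma integral_Ico_comp_add (f : ℝ → ℝ) (d p q : ℝ) :
    ∫ a in Ico p q, f (a + d) = ∫ a in Ico (p + d) (q + d), f a := by
  have hpre : (fun a : ℝ => a + d) ⁻¹' (Ico (p + d) (q + d)) = Ico p q := by
    ext a; simp only [mem_preimage, mem_Ico]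
    constructor <;> rintro ⟨h1, h2⟩ <;> exact ⟨by linarith, by linarith⟩
  rw [← hpre, setIntegral_comp_add]

lemma integrableOn_comp_add {f : ℝ → ℝ} (d : ℝ) {s : Set ℝ} (hs : MeasurableSet s)
    (hf : IntegrableOn f s) : IntegrableOn (fun a => f (a + d)) ((fun a : ℝ => a + d) ⁻¹' s) := by
  have h1 : volume.restrict s
      = Measure.map (fun a : ℝ => a + d) (volume.restrict ((fun a : ℝ => a + d) ⁻¹' s)) := by
    rw [← Measure.restrict_map (emb_add d).measurable hs, map_add_right_eq_self volume d]
  have h2 : Integrable f (Measure.map (fun a : ℝ => a + d)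
      (volume.restrict ((fun a : ℝ => a + d) ⁻¹' s))) := h1 ▸ hf
  exact ((emb_add d).integrable_map_iff).1 h2



lemma split_Iio {f : ℝ → ℝ} (hi : ∀ z : ℝ, IntegrableOn f (Iio z)) {u v : ℝ} (h : u ≤ v) :
    ∫ a in Iio v, f a = (∫ a in Iio u, f a) + ∫ a in Ico u v, f a := by
  rw [← Iio_union_Ico_eq_Iio h, setIntegral_union]
  · exact (Set.Iio_disjoint_Ici le_rfl).mono_right Ico_subset_Ici_self
  · exact measurableSet_Ico
  · exact hi u
  · exact (hi v).mono_set (Ico_subset_Iio_self.trans (by simp))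

lemma G_mono {f : ℝ → ℝ} (h0 : ∀ x, 0 ≤ f x) (hi : ∀ z : ℝ, IntegrableOn f (Iio z)) :
    Monotone (fun z => ∫ a in Iio z, f a) := by
  intro u v h
  simp only
  rw [split_Iio hi h]
  have : 0 ≤ ∫ a in Ico u v, f a := setIntegral_nonneg measurableSet_Ico fun x _ => h0 x
  linarith

lemma G_cont {f : ℝ → ℝ} (hi : ∀ z : ℝ, IntegrableOn f (Iio z)) :
    Continuous (fun z => ∫ a in Iio z, f a) := by
  have hII : ∀ a b : ℝ, IntervalIntegrable f volume a b := by
    intro a b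
    rw [intervalIntegrable_iff]
    refine (hi (max a b + 1)).mono_set fun x hx => ?_
    have := hx.2
    simp only [mem_Iio]
    calc x ≤ max a b := this
      _ < max a b + 1 := by linarith
  have key : ∀ z : ℝ, (∫ a in Iio z, f a) = (∫ a in Iio (0:ℝ), f a) + ∫ t in (0:ℝ)..z, f t := by
    intro z
    rcases le_total (0:ℝ) z with h | h
    · rw [intervalIntegral.integral_of_le h, split_Iio hi h,
        integral_Ico_eq_integral_Ioo, integral_Ioc_eq_integral_Ioo]
    · rw [intervalIntegral.integral_of_ge h, split_Iio hi h,
        integral_Ico_eq_integral_Ioo, integral_Ioc_eq_integral_Ioo]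
      ring
  have : (fun z => ∫ a in Iio z, f a)
      = fun z => (∫ a in Iio (0:ℝ), f a) + ∫ t in (0:ℝ)..z, f t := funext key
  rw [this]
  exact continuous_const.add (intervalIntegral.continuous_primitive hII 0)



lemma G_mid {f : ℝ → ℝ} (h0 : ∀ x, 0 ≤ f x)
    (hlc : ∀ x y t : ℝ, 0 ≤ t → t ≤ 1 → f x ^ (1 - t) * f y ^ t ≤ f ((1 - t) * x + t * y))
    (hi : ∀ z : ℝ, IntegrableOn f (Iio z)) (m d : ℝ) (hd : 0 ≤ d) :
    (∫ a in Iio (m - d), f a) * (∫ a in Iio (m + d), f a)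
      ≤ (∫ a in Iio m, f a) * (∫ a in Iio m, f a) := by
  have hxm : m - d ≤ m := by linarith
  have hmy : m ≤ m + d := by linarith
  have h1 : (∫ a in Iio (m + d), f a)
      = (∫ a in Iio m, f a) + ∫ b in Ico m (m + d), f b := split_Iio hi hmy
  have h2 : (∫ a in Iio m, f a)
      = (∫ a in Iio (m - d), f a) + ∫ u in Ico (m - d) m, f u := split_Iio hi hxm
  -- integrability facts
  have hiIco1 : IntegrableOn f (Ico m (m + d)) :=
    (hi (m + d)).mono_set (Ico_subset_Iio_self)
  have hiIco2 : IntegrableOn f (Ico (m - d) m) := (hi m).mono_set (Ico_subset_Iio_self)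
  have hpre1 : (fun b : ℝ => b + -d) ⁻¹' (Ico (m - d) m) = Ico m (m + d) := by
    ext b; simp only [mem_preimage, mem_Ico]
    constructor <;> rintro ⟨u1, u2⟩ <;> exact ⟨by linarith, by linarith⟩
  have hiIco3 : IntegrableOn (fun b => f (b + -d)) (Ico m (m + d)) := by
    have := integrableOn_comp_add (-d) measurableSet_Ico hiIco2
    rwa [hpre1] at this
  have hpre2 : (fun a : ℝ => a + d) ⁻¹' (Iio m) = Iio (m - d) := by
    ext a; simp only [mem_preimage, mem_Iio]; constructor <;> intro <;> linarith
  have hiIio3 : IntegrableOn (fun a => f (a + d)) (Iio (m - d)) := by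
    have := integrableOn_comp_add d measurableSet_Iio (hi m)
    rwa [hpre2] at this
  -- step i : pointwise in a
  have stepi : ∀ a ∈ Iio (m - d),
      f a * (∫ b in Ico m (m + d), f b) ≤ f (a + d) * ∫ u in Ico (m - d) m, f u := by
    intro a ha
    simp only [mem_Iio] at ha
    have e1 : f a * (∫ b in Ico m (m + d), f b) = ∫ b in Ico m (m + d), f a * f b :=
      (integral_const_mul _ _).symm
    have e2 : (∫ b in Ico m (m + d), f (b + -d)) = ∫ u in Ico (m - d) m, f u := by
      rw [integral_Ico_comp_add f (-d) m (m + d)]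
      norm_num [sub_eq_add_neg]
    have mono : (∫ b in Ico m (m + d), f a * f b)
        ≤ ∫ b in Ico m (m + d), f (a + d) * f (b + -d) := by
      apply setIntegral_mono_on (hiIco1.const_mul _) (hiIco3.const_mul _) measurableSet_Ico
      intro b hb
      have hb1 := hb.1
      have key : f a * f b ≤ f (a + d) * f (b - d) := by
        rcases le_total (a + d) (b - d) with hc | hc
        · exact four_pt h0 hlc (by linarith) hc (by linarith) (by ring)
        · have := four_pt h0 hlc (s := a) (u := b - d) (v := a + d) (r := b)
            (by linarith) hc (by linarith) (by ring)
          linarith [this, mul_comm (f (b - d)) (f (a + d))]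
      simpa [sub_eq_add_neg] using key
    have e3 : (∫ b in Ico m (m + d), f (a + d) * f (b + -d))
        = f (a + d) * ∫ u in Ico (m - d) m, f u := by
      rw [integral_const_mul, e2]
    linarith [e1 ▸ mono, e3 ▸ mono]
  -- step ii : integrate over a
  have stepii : (∫ a in Iio (m - d), f a) * (∫ b in Ico m (m + d), f b)
      ≤ (∫ a in Iio m, f a) * ∫ u in Ico (m - d) m, f u := by
    have mono2 : (∫ a in Iio (m - d), f a * (∫ b in Ico m (m + d), f b))
        ≤ ∫ a in Iio (m - d), f (a + d) * (∫ u in Ico (m - d) m, f u) :=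
      setIntegral_mono_on ((hi (m - d)).mul_const _) (hiIio3.mul_const _)
        measurableSet_Iio stepi
    have e4 : (∫ a in Iio (m - d), f a * (∫ b in Ico m (m + d), f b))
        = (∫ a in Iio (m - d), f a) * (∫ b in Ico m (m + d), f b) := integral_mul_const _ _
    have e5 : (∫ a in Iio (m - d), f (a + d) * (∫ u in Ico (m - d) m, f u))
        = (∫ a in Iio m, f a) * (∫ u in Ico (m - d) m, f u) := by
      rw [integral_mul_const, integral_Iio_comp_add]
      norm_num
    linarith [e4 ▸ mono2, e5 ▸ mono2]
  calc (∫ a in Iio (m - d), f a) * (∫ a in Iio (m + d), f a)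
      = (∫ a in Iio (m - d), f a) * (∫ a in Iio m, f a)
        + (∫ a in Iio (m - d), f a) * (∫ b in Ico m (m + d), f b) := by rw [h1]; ring
    _ ≤ (∫ a in Iio (m - d), f a) * (∫ a in Iio m, f a)
        + (∫ a in Iio m, f a) * (∫ u in Ico (m - d) m, f u) := by linarith [stepii]
    _ = (∫ a in Iio m, f a) * (∫ a in Iio m, f a) := by linear_combination (-(∫ a in Iio m, f a)) * h2



lemma concaveOn_of_midpoint {s : Set ℝ} {φ : ℝ → ℝ} (hs : Convex ℝ s)
    (hc : ContinuousOn φ s)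
    (hmid : ∀ x ∈ s, ∀ y ∈ s, (φ x + φ y) / 2 ≤ φ ((x + y) / 2)) :
    ConcaveOn ℝ s φ := by
  refine ⟨hs, ?_⟩
  intro x hx y hy a b ha hb hab
  have hmem : ∀ t : ℝ, 0 ≤ t → t ≤ 1 → (1 - t) * x + t * y ∈ s := by
    intro t ht0 ht1
    have := hs hx hy (by linarith : (0:ℝ) ≤ 1 - t) ht0 (by ring)
    simpa [smul_eq_mul] using this
  -- dyadic claim
  have dyadic : ∀ nn : ℕ, ∀ k : ℕ, k ≤ 2 ^ nn →
      (1 - (k : ℝ) / 2 ^ nn) * φ x + ((k : ℝ) / 2 ^ nn) * φ y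
        ≤ φ ((1 - (k : ℝ) / 2 ^ nn) * x + ((k : ℝ) / 2 ^ nn) * y) := by
    intro nn
    induction nn with
    | zero =>
      intro k hk
      interval_cases k <;> norm_num
    | succ n ih =>
      intro k hk
      rcases Nat.even_or_odd k with ⟨j, hj⟩ | ⟨j, hj⟩
      · subst hj
        have hj2 : j ≤ 2 ^ n := by
          have : 2 * j ≤ 2 * 2 ^ n := by rw [pow_succ] at hk; linarith
          omega
        have e : ((j + j : ℕ) : ℝ) / 2 ^ (n + 1) = (j : ℝ) / 2 ^ n := by
          push_cast [pow_succ]; field_simp; ring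
        rw [e]; exact ih j hj2
      · subst hj
        have hj1 : j + 1 ≤ 2 ^ n := by
          rw [pow_succ] at hk; omega
        have hj0 : j ≤ 2 ^ n := by omega
        have H1 := ih j hj0
        have H2 := ih (j + 1) hj1
        set t1 : ℝ := (j : ℝ) / 2 ^ n with ht1
        set t2 : ℝ := ((j : ℝ) + 1) / 2 ^ n with ht2
        have ht1' : ((j : ℕ) : ℝ) / 2 ^ n = t1 := rfl
        have hcast : (((j + 1 : ℕ)) : ℝ) / 2 ^ n = t2 := by push_cast; rfl
        rw [hcast] at H2
        have hp2 : (0:ℝ) < 2 ^ n := by positivity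
        have h01 : 0 ≤ t1 ∧ t1 ≤ 1 := by
          constructor
          · positivity
          · rw [ht1, div_le_one hp2]; exact_mod_cast (by exact_mod_cast hj0 : (j:ℝ) ≤ 2 ^ n)
        have h02 : 0 ≤ t2 ∧ t2 ≤ 1 := by
          constructor
          · positivity
          · rw [ht2, div_le_one hp2]; push_cast; exact_mod_cast (by push_cast; exact_mod_cast hj1 : (j:ℝ) + 1 ≤ 2 ^ n)
        have hm1 := hmem t1 h01.1 h01.2
        have hm2 := hmem t2 h02.1 h02.2
        have hmd := hmid _ hm1 _ hm2
        have emid : (((1 - t1) * x + t1 * y) + ((1 - t2) * x + t2 * y)) / 2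
            = (1 - ((2 * j + 1 : ℕ) : ℝ) / 2 ^ (n + 1)) * x
              + (((2 * j + 1 : ℕ) : ℝ) / 2 ^ (n + 1)) * y := by
          rw [ht1, ht2]; push_cast [pow_succ]; field_simp; ring
        rw [emid] at hmd
        have efin : (1 - ((2 * j + 1 : ℕ) : ℝ) / 2 ^ (n + 1)) * φ x
              + (((2 * j + 1 : ℕ) : ℝ) / 2 ^ (n + 1)) * φ y
            = (((1 - t1) * φ x + t1 * φ y) + ((1 - t2) * φ x + t2 * φ y)) / 2 := by
          rw [ht1, ht2]; push_cast [pow_succ]; field_simp; ring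
        rw [efin]
        calc (((1 - t1) * φ x + t1 * φ y) + ((1 - t2) * φ x + t2 * φ y)) / 2
            ≤ (φ ((1 - t1) * x + t1 * y) + φ ((1 - t2) * x + t2 * y)) / 2 := by linarith
          _ ≤ _ := hmd
  -- limit argument
  have hb1 : b ≤ 1 := by linarith
  -- sequence
  set tn : ℕ → ℝ := fun nn => (⌊b * 2 ^ nn⌋₊ : ℝ) / 2 ^ nn with htn
  have htn01 : ∀ nn, ⌊b * 2 ^ nn⌋₊ ≤ 2 ^ nn := by
    intro nn
    have h1 : b * 2 ^ nn ≤ 2 ^ nn := by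
      have : (0:ℝ) < 2 ^ nn := by positivity
      nlinarith
    calc ⌊b * 2 ^ nn⌋₊ ≤ ⌊((2 ^ nn : ℕ) : ℝ)⌋₊ := Nat.floor_le_floor (by push_cast; exact h1)
      _ = 2 ^ nn := Nat.floor_natCast _
  have hseq : ∀ nn, (1 - tn nn) * φ x + tn nn * φ y ≤ φ ((1 - tn nn) * x + tn nn * y) :=
    fun nn => dyadic nn _ (htn01 nn)
  have htlo : ∀ nn, b - (1/2) ^ nn ≤ tn nn := by
    intro nn
    have h2 : (0:ℝ) < 2 ^ nn := by positivity
    show b - (1/2) ^ nn ≤ (⌊b * 2 ^ nn⌋₊ : ℝ) / 2 ^ nn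
    have hfl := Nat.lt_floor_add_one (b * 2 ^ nn)
    have hble : b ≤ ((⌊b * 2 ^ nn⌋₊ : ℝ) + 1) / 2 ^ nn := by
      rw [le_div_iff₀ h2]; linarith
    have heq : ((⌊b * 2 ^ nn⌋₊ : ℝ) + 1) / 2 ^ nn - (1/2) ^ nn
        = (⌊b * 2 ^ nn⌋₊ : ℝ) / 2 ^ nn := by
      rw [one_div, inv_pow, ← one_div]
      field_simp; ring
    linarith
  have hthi : ∀ nn, tn nn ≤ b := by
    intro nn
    have h2 : (0:ℝ) < 2 ^ nn := by positivity
    rw [htn]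
    rw [div_le_iff₀ h2]
    exact Nat.floor_le (by positivity)
  have htend : Tendsto tn atTop (nhds b) := by
    have hgeo : Tendsto (fun nn : ℕ => b - (1/2:ℝ) ^ nn) atTop (nhds (b - 0)) :=
      tendsto_const_nhds.sub (tendsto_pow_atTop_nhds_zero_of_lt_one (by norm_num) (by norm_num))
    rw [sub_zero] at hgeo
    exact tendsto_of_tendsto_of_tendsto_of_le_of_le hgeo tendsto_const_nhds htlo hthi
  -- continuity
  have hpt : Tendsto (fun nn => (1 - tn nn) * x + tn nn * y) atTop (nhds ((1 - b) * x + b * y)) := by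
    have : Continuous (fun t : ℝ => (1 - t) * x + t * y) := by continuity
    exact (this.tendsto b).comp htend
  have hmemn : ∀ nn, (1 - tn nn) * x + tn nn * y ∈ s := by
    intro nn
    refine hmem _ (by positivity) ((hthi nn).trans hb1)
  have hmemb : (1 - b) * x + b * y ∈ s := hmem b hb hb1
  have hφtend : Tendsto (fun nn => φ ((1 - tn nn) * x + tn nn * y)) atTop
      (nhds (φ ((1 - b) * x + b * y))) := by
    have hwithin : Tendsto (fun nn => (1 - tn nn) * x + tn nn * y) atTop
        (nhdsWithin ((1 - b) * x + b * y) s) :=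
      tendsto_nhdsWithin_iff.2 ⟨hpt, Eventually.of_forall hmemn⟩
    exact (hc _ hmemb).tendsto.comp hwithin
  have hrtend : Tendsto (fun nn => (1 - tn nn) * φ x + tn nn * φ y) atTop
      (nhds ((1 - b) * φ x + b * φ y)) := by
    have : Continuous (fun t : ℝ => (1 - t) * φ x + t * φ y) := by continuity
    exact (this.tendsto b).comp htend
  have final : (1 - b) * φ x + b * φ y ≤ φ ((1 - b) * x + b * y) :=
    le_of_tendsto_of_tendsto' hrtend hφtend hseq
  have hae : a = 1 - b := by linarith
  subst hae
  simpa [smul_eq_mul] using final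



-- convexity of the positivity set, for any monotone-or-antitone G: do both concretely
lemma pos_set_convex_of_mono {g : ℝ → ℝ} (hg : Monotone g) : Convex ℝ {z : ℝ | 0 < g z} := by
  intro p hp q hq a b ha hb hab
  simp only [mem_setOf_eq, smul_eq_mul] at *
  have hpp : a * p + b * p = p := by linear_combination p * hab
  have hqq : a * q + b * q = q := by linear_combination q * hab
  rcases le_total p q with h | h
  · have : p ≤ a * p + b * q := by nlinarith [mul_nonneg hb (by linarith : (0:ℝ) ≤ q - p)]
    exact lt_of_lt_of_le hp (hg this)
  · have : q ≤ a * p + b * q := by nlinarith [mul_nonneg ha (by linarith : (0:ℝ) ≤ p - q)]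
    exact lt_of_lt_of_le hq (hg this)

lemma pos_set_convex_of_anti {g : ℝ → ℝ} (hg : Antitone g) : Convex ℝ {z : ℝ | 0 < g z} := by
  intro p hp q hq a b ha hb hab
  simp only [mem_setOf_eq, smul_eq_mul] at *
  have hpp : a * p + b * p = p := by linear_combination p * hab
  have hqq : a * q + b * q = q := by linear_combination q * hab
  rcases le_total p q with h | h
  · have : a * p + b * q ≤ q := by nlinarith [mul_nonneg ha (by linarith : (0:ℝ) ≤ q - p)]
    exact lt_of_lt_of_le hq (hg this)
  · have : a * p + b * q ≤ p := by nlinarith [mul_nonneg hb (by linarith : (0:ℝ) ≤ p - q)]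
    exact lt_of_lt_of_le hp (hg this)

lemma neg_log_Iio_convexOn {f : ℝ → ℝ} (h0 : ∀ x, 0 ≤ f x)
    (hlc : ∀ x y t : ℝ, 0 ≤ t → t ≤ 1 → f x ^ (1 - t) * f y ^ t ≤ f ((1 - t) * x + t * y))
    (hi : ∀ z : ℝ, IntegrableOn f (Iio z)) :
    ConvexOn ℝ {z : ℝ | 0 < ∫ a in Iio z, f a}
      (fun z => - Real.log (∫ a in Iio z, f a)) := by
  set G : ℝ → ℝ := fun z => ∫ a in Iio z, f a with hG
  have hmono : Monotone G := G_mono h0 hi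
  have hK : Convex ℝ {z : ℝ | 0 < G z} := pos_set_convex_of_mono hmono
  have hcont : ContinuousOn (fun z => Real.log (G z)) {z : ℝ | 0 < G z} := by
    apply ContinuousOn.comp (t := {x : ℝ | x ≠ 0}) Real.continuousOn_log
      (G_cont hi).continuousOn
    intro z hz
    exact ne_of_gt hz
  have hmid : ∀ p ∈ {z : ℝ | 0 < G z}, ∀ q ∈ {z : ℝ | 0 < G z},
      (Real.log (G p) + Real.log (G q)) / 2 ≤ Real.log (G ((p + q) / 2)) := by
    intro p hp q hq
    simp only [mem_setOf_eq] at hp hq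
    have key : ∀ p q : ℝ, p ≤ q → 0 < G p → 0 < G q →
        (Real.log (G p) + Real.log (G q)) / 2 ≤ Real.log (G ((p + q) / 2)) := by
      intro p q hpq hp hq
      have hm : G p * G q ≤ G ((p + q) / 2) * G ((p + q) / 2) := by
        have := G_mid h0 hlc hi ((p + q) / 2) ((q - p) / 2) (by linarith)
        have e1 : (p + q) / 2 - (q - p) / 2 = p := by ring
        have e2 : (p + q) / 2 + (q - p) / 2 = q := by ring
        rwa [e1, e2] at this
      have hGm : 0 < G ((p + q) / 2) := lt_of_lt_of_le hp (hmono (by linarith))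
      have hlog := Real.log_le_log (by positivity) hm
      rw [Real.log_mul (ne_of_gt hp) (ne_of_gt hq), Real.log_mul (ne_of_gt hGm) (ne_of_gt hGm)]
        at hlog
      linarith
    rcases le_total p q with h | h
    · exact key p q h hp hq
    · have := key q p h hq hp
      rw [show q + p = p + q by ring] at this
      linarith
  have hconc : ConcaveOn ℝ {z : ℝ | 0 < G z} (fun z => Real.log (G z)) :=
    concaveOn_of_midpoint hK hcont hmid
  exact hconc.neg

lemma neg_comp_convexOn {s : Set ℝ} {g : ℝ → ℝ} (h : ConvexOn ℝ s g) :
    ConvexOn ℝ {z : ℝ | -z ∈ s} (fun z => g (-z)) := by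
  refine ⟨?_, ?_⟩
  · intro p hp q hq a b ha hb hab
    have := h.1 hp hq ha hb hab
    simp only [mem_setOf_eq, smul_eq_mul] at *
    have e : -(a * p + b * q) = a * (-p) + b * (-q) := by ring
    rw [e]; exact this
  · intro p hp q hq a b ha hb hab
    have := h.2 hp hq ha hb hab
    simp only [mem_setOf_eq, smul_eq_mul] at *
    have e : -(a * p + b * q) = a * (-p) + b * (-q) := by ring
    rw [e]; exact this

lemma neg_log_Ioi_convexOn {f : ℝ → ℝ} (h0 : ∀ x, 0 ≤ f x)
    (hlc : ∀ x y t : ℝ, 0 ≤ t → t ≤ 1 → f x ^ (1 - t) * f y ^ t ≤ f ((1 - t) * x + t * y))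
    (hi : ∀ z : ℝ, IntegrableOn f (Ioi z)) :
    ConvexOn ℝ {z : ℝ | 0 < ∫ a in Ioi z, f a}
      (fun z => - Real.log (∫ a in Ioi z, f a)) := by
  set g : ℝ → ℝ := fun a => f (-a) with hgdef
  have hrel : ∀ z : ℝ, (∫ a in Ioi z, f a) = ∫ a in Iio (-z), g a := by
    intro z
    rw [hgdef]
    have h1 : (∫ a in Iio (-z), f (-a)) = ∫ a in Iic (-z), f (-a) := by
      rw [integral_Iic_eq_integral_Iio]
    rw [h1, integral_comp_neg_Iic, neg_neg]
  have h0' : ∀ x, 0 ≤ g x := fun x => h0 (-x)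
  have hlc' : ∀ x y t : ℝ, 0 ≤ t → t ≤ 1 → g x ^ (1 - t) * g y ^ t ≤ g ((1 - t) * x + t * y) := by
    intro x y t ht0 ht1
    have := hlc (-x) (-y) t ht0 ht1
    rw [hgdef]
    simp only
    have e : -((1 - t) * x + t * y) = (1 - t) * (-x) + t * (-y) := by ring
    rw [e]; exact this
  have hi' : ∀ z : ℝ, IntegrableOn g (Iio z) := by
    intro z
    have hemb : MeasurableEmbedding (fun a : ℝ => -a) :=
      (Homeomorph.neg ℝ).isClosedEmbedding.measurableEmbedding
    have hpre : (fun a : ℝ => -a) ⁻¹' (Ioi (-z)) = Iio z := by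
      ext a; simp only [mem_preimage, mem_Ioi, mem_Iio]; constructor <;> intro <;> linarith
    have h1 := Measure.restrict_map (μ := (volume : Measure ℝ)) hemb.measurable
      (measurableSet_Ioi (a := -z))
    rw [Measure.map_neg_eq_self (volume : Measure ℝ), hpre] at h1
    have h2 : Integrable f (Measure.map (fun a : ℝ => -a) (volume.restrict (Iio z))) :=
      h1 ▸ (hi (-z))
    exact hemb.integrable_map_iff.1 h2
  have base := neg_log_Iio_convexOn h0' hlc' hi'
  have := neg_comp_convexOn base
  have hset : {z : ℝ | -z ∈ {w : ℝ | 0 < ∫ a in Iio w, g a}} = {z : ℝ | 0 < ∫ a in Ioi z, f a} := by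
    ext z; simp only [mem_setOf_eq, hrel]
  have hfun : (fun z => - Real.log (∫ a in Iio (-z), g a))
      = fun z => - Real.log (∫ a in Ioi z, f a) := by
    funext z; rw [hrel]
  rw [hset, hfun] at this
  exact this

-- quadratic form convexity inequality
lemma quad_ineq {n : ℕ} {M : Matrix (Fin n) (Fin n) ℝ} (hM : M.PosSemidef)
    (x y : Fin n → ℝ) (a b : ℝ) (ha : 0 ≤ a) (hb : 0 ≤ b) (hab : a + b = 1) :
    dotProduct (a • x + b • y) (M.mulVec (a • x + b • y))
      ≤ a * dotProduct x (M.mulVec x) + b * dotProduct y (M.mulVec y) := by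
  have h0 : 0 ≤ dotProduct (x - y) (M.mulVec (x - y)) := by
    have := hM.dotProduct_mulVec_nonneg (x - y)
    simpa using this
  simp only [Matrix.mulVec_add, Matrix.mulVec_smul, add_dotProduct,
    dotProduct_add, smul_dotProduct, dotProduct_smul,
    sub_dotProduct, dotProduct_sub, Matrix.mulVec_sub, smul_eq_mul] at *
  have hb' : b = 1 - a := by linarith
  subst hb'
  nlinarith [mul_nonneg (mul_nonneg ha hb) h0]


lemma H_anti {f : ℝ → ℝ} (h0 : ∀ x, 0 ≤ f x) (hi : ∀ z : ℝ, IntegrableOn f (Ioi z)) :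
    Antitone (fun z => ∫ a in Ioi z, f a) := by
  intro u v h
  simp only
  exact setIntegral_mono_set (hi u) (Eventually.of_forall fun x => h0 x)
    (HasSubset.Subset.eventuallyLE (Ioi_subset_Ioi h))

end Stmt12Aux

open Stmt12Aux

theorem stmt_12 (n N l : ℕ)
    (f : Fin l → ℝ → ℝ)
    (hmeas : ∀ i, Measurable (f i))
    (hnonneg : ∀ i x, 0 ≤ f i x)
    (hlc : ∀ i, ∀ x y t : ℝ, 0 ≤ t → t ≤ 1 →
      f i x ^ (1 - t) * f i y ^ t ≤ f i ((1 - t) * x + t * y))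
    (hint₁ : ∀ i, ∀ z : ℝ, IntegrableOn (f i) (Set.Iio z))
    (hint₂ : ∀ i, ∀ z : ℝ, IntegrableOn (f i) (Set.Ioi z))
    (c : Fin l → Fin n → ℝ) (τ : Fin l → ℝ)
    (y : Fin (N + 1) → Fin l → ℝ)
    (hy : ∀ j i, y j i = 0 ∨ y j i = 1)
    (A : Matrix (Fin n) (Fin n) ℝ) (b : Fin N → Fin n → ℝ)
    (xbar : Fin n → ℝ) (Ψ G : Matrix (Fin n) (Fin n) ℝ)
    (hΨ : Ψ.PosSemidef) (hG : G.PosSemidef) :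
    Convex ℝ {X : Fin (N + 1) → Fin n → ℝ | ∀ j i,
        (y j i = 0 → 0 < ∫ s in Set.Iio (τ i - ∑ k, c i k * X j k), f i s) ∧
        (y j i = 1 → 0 < ∫ s in Set.Ioi (τ i - ∑ k, c i k * X j k), f i s)} ∧
    ConvexOn ℝ {X : Fin (N + 1) → Fin n → ℝ | ∀ j i,
        (y j i = 0 → 0 < ∫ s in Set.Iio (τ i - ∑ k, c i k * X j k), f i s) ∧
        (y j i = 1 → 0 < ∫ s in Set.Ioi (τ i - ∑ k, c i k * X j k), f i s)}
      (fun X : Fin (N + 1) → Fin n → ℝ =>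
        dotProduct (X 0 - xbar) (Ψ.mulVec (X 0 - xbar)) +
        (∑ j : Fin N, dotProduct
          (X j.succ - A.mulVec (X j.castSucc) - b j)
          (G.mulVec (X j.succ - A.mulVec (X j.castSucc) - b j))) -
        ∑ j : Fin (N + 1), ∑ i : Fin l,
          ((1 - y j i) *
              Real.log (∫ s in Set.Iio (τ i - ∑ k, c i k * X j k), f i s) +
            y j i *
              Real.log (∫ s in Set.Ioi (τ i - ∑ k, c i k * X j k), f i s))) := by
  -- abbreviations
  have monoG : ∀ i : Fin l, Monotone (fun z => ∫ a in Set.Iio z, f i a) :=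
    fun i => G_mono (hnonneg i) (hint₁ i)
  have antiH : ∀ i : Fin l, Antitone (fun z => ∫ a in Set.Ioi z, f i a) :=
    fun i => H_anti (hnonneg i) (hint₂ i)
  have CA : ∀ i : Fin l, ConvexOn ℝ {z : ℝ | 0 < ∫ a in Set.Iio z, f i a}
      (fun z => - Real.log (∫ a in Set.Iio z, f i a)) :=
    fun i => neg_log_Iio_convexOn (hnonneg i) (hlc i) (hint₁ i)
  have CB : ∀ i : Fin l, ConvexOn ℝ {z : ℝ | 0 < ∫ a in Set.Ioi z, f i a}
      (fun z => - Real.log (∫ a in Set.Ioi z, f i a)) :=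
    fun i => neg_log_Ioi_convexOn (hnonneg i) (hlc i) (hint₂ i)
  -- affine identity for the scalar argument
  have hell : ∀ (X Y : Fin (N + 1) → Fin n → ℝ) (a b : ℝ), a + b = 1 →
      ∀ (j : Fin (N + 1)) (i : Fin l),
      τ i - ∑ k, c i k * ((a • X + b • Y) j k)
        = a * (τ i - ∑ k, c i k * X j k) + b * (τ i - ∑ k, c i k * Y j k) := by
    intro X Y a b hab j i
    have hsum : ∑ k, c i k * ((a • X + b • Y) j k)
        = a * (∑ k, c i k * X j k) + b * (∑ k, c i k * Y j k) := by
      rw [Finset.mul_sum, Finset.mul_sum, ← Finset.sum_add_distrib]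
      apply Finset.sum_congr rfl
      intro k _
      simp only [Pi.add_apply, Pi.smul_apply, smul_eq_mul]
      ring
    rw [hsum]
    linear_combination (-(τ i)) * hab
  -- convexity of the constraint set
  have convS : Convex ℝ {X : Fin (N + 1) → Fin n → ℝ | ∀ j i,
      (y j i = 0 → 0 < ∫ s in Set.Iio (τ i - ∑ k, c i k * X j k), f i s) ∧
      (y j i = 1 → 0 < ∫ s in Set.Ioi (τ i - ∑ k, c i k * X j k), f i s)} := by
    intro X hX Y hY a b ha hb hab
    simp only [mem_setOf_eq] at hX hY ⊢
    intro j i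
    constructor
    · intro h0'
      rw [hell X Y a b hab j i]
      have hmem1 : (τ i - ∑ k, c i k * X j k) ∈ {z : ℝ | 0 < ∫ a in Set.Iio z, f i a} :=
        (hX j i).1 h0'
      have hmem2 : (τ i - ∑ k, c i k * Y j k) ∈ {z : ℝ | 0 < ∫ a in Set.Iio z, f i a} :=
        (hY j i).1 h0'
      have := pos_set_convex_of_mono (monoG i) hmem1 hmem2 ha hb hab
      simpa only [mem_setOf_eq, smul_eq_mul] using this
    · intro h1'
      rw [hell X Y a b hab j i]
      have hmem1 : (τ i - ∑ k, c i k * X j k) ∈ {z : ℝ | 0 < ∫ a in Set.Ioi z, f i a} :=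
        (hX j i).2 h1'
      have hmem2 : (τ i - ∑ k, c i k * Y j k) ∈ {z : ℝ | 0 < ∫ a in Set.Ioi z, f i a} :=
        (hY j i).2 h1'
      have := pos_set_convex_of_anti (antiH i) hmem1 hmem2 ha hb hab
      simpa only [mem_setOf_eq, smul_eq_mul] using this
  refine ⟨convS, convS, ?_⟩
  intro X hX Y hY aa bb haa hbb habb
  simp only [mem_setOf_eq] at hX hY
  simp only [smul_eq_mul]
  -- first quadratic term
  have h1 : dotProduct ((aa • X + bb • Y) 0 - xbar) (Ψ.mulVec ((aa • X + bb • Y) 0 - xbar))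
      ≤ aa * dotProduct (X 0 - xbar) (Ψ.mulVec (X 0 - xbar))
        + bb * dotProduct (Y 0 - xbar) (Ψ.mulVec (Y 0 - xbar)) := by
    have e : (aa • X + bb • Y) 0 - xbar = aa • (X 0 - xbar) + bb • (Y 0 - xbar) := by
      funext k
      simp only [Pi.add_apply, Pi.smul_apply, Pi.sub_apply, smul_eq_mul]
      linear_combination (xbar k) * habb
    rw [e]
    exact quad_ineq hΨ _ _ aa bb haa hbb habb
  -- dynamics quadratic terms
  have h2 : ∀ j : Fin N,
      dotProduct ((aa • X + bb • Y) j.succ - A.mulVec ((aa • X + bb • Y) j.castSucc) - b j)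
        (G.mulVec ((aa • X + bb • Y) j.succ - A.mulVec ((aa • X + bb • Y) j.castSucc) - b j))
      ≤ aa * dotProduct (X j.succ - A.mulVec (X j.castSucc) - b j)
          (G.mulVec (X j.succ - A.mulVec (X j.castSucc) - b j))
        + bb * dotProduct (Y j.succ - A.mulVec (Y j.castSucc) - b j)
          (G.mulVec (Y j.succ - A.mulVec (Y j.castSucc) - b j)) := by
    intro j
    have hc1 : (aa • X + bb • Y) j.castSucc = aa • (X j.castSucc) + bb • (Y j.castSucc) := by
      funext k; simp only [Pi.add_apply, Pi.smul_apply]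
    have e : (aa • X + bb • Y) j.succ - A.mulVec ((aa • X + bb • Y) j.castSucc) - b j
        = aa • (X j.succ - A.mulVec (X j.castSucc) - b j)
          + bb • (Y j.succ - A.mulVec (Y j.castSucc) - b j) := by
      rw [hc1, Matrix.mulVec_add, Matrix.mulVec_smul, Matrix.mulVec_smul]
      funext k
      simp only [Pi.add_apply, Pi.smul_apply, Pi.sub_apply, smul_eq_mul]
      linear_combination (b j k) * habb
    rw [e]
    exact quad_ineq hG _ _ aa bb haa hbb habb
  have h2sum : ∑ j : Fin N,
      dotProduct ((aa • X + bb • Y) j.succ - A.mulVec ((aa • X + bb • Y) j.castSucc) - b j)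
        (G.mulVec ((aa • X + bb • Y) j.succ - A.mulVec ((aa • X + bb • Y) j.castSucc) - b j))
      ≤ aa * ∑ j : Fin N, dotProduct (X j.succ - A.mulVec (X j.castSucc) - b j)
          (G.mulVec (X j.succ - A.mulVec (X j.castSucc) - b j))
        + bb * ∑ j : Fin N, dotProduct (Y j.succ - A.mulVec (Y j.castSucc) - b j)
          (G.mulVec (Y j.succ - A.mulVec (Y j.castSucc) - b j)) := by
    rw [Finset.mul_sum, Finset.mul_sum, ← Finset.sum_add_distrib]
    exact Finset.sum_le_sum fun j _ => h2 j
  -- log terms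
  have h3 : aa * (∑ j : Fin (N + 1), ∑ i : Fin l,
        ((1 - y j i) * Real.log (∫ s in Set.Iio (τ i - ∑ k, c i k * X j k), f i s)
          + y j i * Real.log (∫ s in Set.Ioi (τ i - ∑ k, c i k * X j k), f i s)))
      + bb * (∑ j : Fin (N + 1), ∑ i : Fin l,
        ((1 - y j i) * Real.log (∫ s in Set.Iio (τ i - ∑ k, c i k * Y j k), f i s)
          + y j i * Real.log (∫ s in Set.Ioi (τ i - ∑ k, c i k * Y j k), f i s)))
      ≤ ∑ j : Fin (N + 1), ∑ i : Fin l,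
        ((1 - y j i) * Real.log (∫ s in Set.Iio (τ i - ∑ k, c i k * ((aa • X + bb • Y) j k)), f i s)
          + y j i * Real.log (∫ s in Set.Ioi (τ i - ∑ k, c i k * ((aa • X + bb • Y) j k)), f i s)) := by
    rw [Finset.mul_sum, Finset.mul_sum, ← Finset.sum_add_distrib]
    apply Finset.sum_le_sum
    intro j _
    rw [Finset.mul_sum, Finset.mul_sum, ← Finset.sum_add_distrib]
    apply Finset.sum_le_sum
    intro i _
    rw [hell X Y aa bb habb j i]
    rcases hy j i with h | h
    · simp only [h, sub_zero, one_mul, zero_mul, add_zero]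
      have hmem1 : (τ i - ∑ k, c i k * X j k) ∈ {z : ℝ | 0 < ∫ a in Set.Iio z, f i a} :=
        (hX j i).1 h
      have hmem2 : (τ i - ∑ k, c i k * Y j k) ∈ {z : ℝ | 0 < ∫ a in Set.Iio z, f i a} :=
        (hY j i).1 h
      have := (CA i).2 hmem1 hmem2 haa hbb habb
      simp only [smul_eq_mul] at this
      linarith
    · simp only [h, sub_self, zero_mul, one_mul, zero_add]
      have hmem1 : (τ i - ∑ k, c i k * X j k) ∈ {z : ℝ | 0 < ∫ a in Set.Ioi z, f i a} :=
        (hX j i).2 h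
      have hmem2 : (τ i - ∑ k, c i k * Y j k) ∈ {z : ℝ | 0 < ∫ a in Set.Ioi z, f i a} :=
        (hY j i).2 h
      have := (CB i).2 hmem1 hmem2 haa hbb habb
      simp only [smul_eq_mul] at this
      linarith
  linarith [h1, h2sum, h3]
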